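/- Let [P(x), -K(x)] and [N(x), -D(x)] form a basis of the interpolation module M_{i-1} for points (g_1,r_1),...,(g_{i-1},r_{i-1}). Set Gamma = P(g_i) - K(r_i) and Delta = N(g_i) - D(r_i). If Gamma is nonzero, then the rows of [[x^q - Gamma^{q-1} x, 0], [Delta x, -Gamma x]] composed with [[P, -K], [N, -D]] form a basis of the interpolation module M_i for points (g_1,r_1),...,(g_i,r_i). -/

import Mathlib

open Polynomial

/-- A `q`-linearized polynomial: all monomials have exponent a power of `q`. -/
def IsLin {F : Type*} [Field F] (q : ℕ) (f : Polynomial F) : Prop :=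
  ∀ i ∈ f.support, ∃ j : ℕ, i = q ^ j

/-- A vector of `q`-linearized polynomials. -/
def IsLinVec {F : Type*} [Field F] (q : ℕ) {l : ℕ} (f : Fin l → Polynomial F) : Prop :=
  ∀ i, IsLin q (f i)

/-- The interpolation module `M_i` for the first `i` points `(g j, r j)`, `j < i`:
all pairs `[f, g]` of `q`-linearized polynomials with `f(g j) + g(r j) = 0` for `j < i`. -/
def InterpModN {F : Type*} [Field F] (q : ℕ) (g r : ℕ → F) (i : ℕ) :
    Set (Fin 2 → Polynomial F) :=
  {p | IsLinVec q p ∧ ∀ j < i, (p 0).eval (g j) + (p 1).eval (r j) = 0}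

/-- `B` is a basis of `M`: its members lie in `M`, generate `M` by left combinations
`∑ aᵢ ∘ bᵢ` with `q`-linearized coefficients, and are linearly independent. -/
def IsBasisOf {F : Type*} [Field F] (q : ℕ) {l : ℕ} {ι : Type*} [Fintype ι]
    (M : Set (Fin l → Polynomial F)) (B : ι → Fin l → Polynomial F) : Prop :=
  (∀ i, B i ∈ M) ∧
  (∀ f ∈ M, ∃ a : ι → Polynomial F, (∀ i, IsLin q (a i)) ∧
    f = fun j => ∑ i, (a i).comp (B i j)) ∧
  (∀ a : ι → Polynomial F, (∀ i, IsLin q (a i)) →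
    ((fun j => ∑ i, (a i).comp (B i j)) = fun _ => (0 : Polynomial F)) → ∀ i, a i = 0)


set_option linter.unusedSectionVars false
set_option linter.unusedVariables false
set_option maxHeartbeats 1000000
namespace LinHelp

variable {F : Type*} [Field F] {q : ℕ}

theorem isLin_zero : IsLin q (0 : F[X]) := by intro i hi; simp at hi

theorem isLin_add {f g : F[X]} (hf : IsLin q f) (hg : IsLin q g) : IsLin q (f + g) := by
  intro i hi
  rcases Finset.mem_union.mp (Polynomial.support_add hi) with h | h
  exacts [hf i h, hg i h]

theorem isLin_neg {f : F[X]} (hf : IsLin q f) : IsLin q (-f) := by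
  intro i hi; exact hf i (by rwa [Polynomial.support_neg] at hi)

theorem isLin_sub {f g : F[X]} (hf : IsLin q f) (hg : IsLin q g) : IsLin q (f - g) := by
  rw [sub_eq_add_neg]; exact isLin_add hf (isLin_neg hg)

theorem isLin_C_mul (c : F) {f : F[X]} (hf : IsLin q f) : IsLin q (C c * f) := by
  intro i hi
  apply hf i
  rw [mem_support_iff] at hi ⊢
  rw [coeff_C_mul] at hi
  exact fun h => hi (by rw [h, mul_zero])

theorem isLin_C_mul_X_pow (c : F) (j : ℕ) : IsLin q (C c * X ^ q ^ j : F[X]) := by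
  intro i hi
  rw [mem_support_iff, coeff_C_mul, coeff_X_pow] at hi
  refine ⟨j, ?_⟩
  by_contra h
  rw [if_neg h, mul_zero] at hi
  exact hi rfl

theorem isLin_C_mul_X (c : F) : IsLin q (C c * X : F[X]) := by
  have h : (C c * X : F[X]) = C c * X ^ q ^ 0 := by rw [pow_zero, pow_one]
  rw [h]
  exact isLin_C_mul_X_pow _ _

theorem isLin_sum {ι : Type*} (s : Finset ι) (h : ι → F[X])
    (hh : ∀ i ∈ s, IsLin q (h i)) : IsLin q (∑ i ∈ s, h i) := by
  classical
  induction s using Finset.induction_on with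
  | empty => simpa using isLin_zero
  | insert x t hx ih =>
    rw [Finset.sum_insert hx]
    exact isLin_add (hh _ (Finset.mem_insert_self _ _))
      (ih fun i hi => hh i (Finset.mem_insert_of_mem hi))

theorem coeff_zero_of_isLin (hq : 1 < q) {f : F[X]} (hf : IsLin q f) : f.coeff 0 = 0 := by
  by_contra h
  obtain ⟨j, hj⟩ := hf 0 (mem_support_iff.mpr h)
  have : 0 < q ^ j := pow_pos (by omega) j
  omega

section CharSec

variable {p e : ℕ} [Fact p.Prime] [CharP F p]

theorem charp_poly : CharP F[X] p :=
  charP_of_injective_algebraMap (by rw [Polynomial.algebraMap_eq]; exact Polynomial.C_injective) p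

theorem eval₂_isLin_add (hq : q = p ^ e) {S : Type*} [CommRing S] [CharP S p]
    (φ : F →+* S) {f : F[X]} (hf : IsLin q f) (x y : S) :
    f.eval₂ φ (x + y) = f.eval₂ φ x + f.eval₂ φ y := by
  simp only [eval₂_eq_sum, Polynomial.sum]
  rw [← Finset.sum_add_distrib]
  refine Finset.sum_congr rfl fun i hi => ?_
  obtain ⟨j, rfl⟩ := hf i hi
  rw [hq, ← pow_mul, add_pow_char_pow, mul_add]

theorem eval_add_of_isLin (hq : q = p ^ e) {f : F[X]} (hf : IsLin q f) (x y : F) :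
    f.eval (x + y) = f.eval x + f.eval y :=
  eval₂_isLin_add hq (RingHom.id F) hf x y

theorem comp_add_of_isLin (hq : q = p ^ e) {f : F[X]} (hf : IsLin q f) (u v : F[X]) :
    f.comp (u + v) = f.comp u + f.comp v :=
  haveI : CharP F[X] p := charp_poly
  eval₂_isLin_add hq C hf u v

theorem comp_zero_of_isLin (hq : q = p ^ e) {f : F[X]} (hf : IsLin q f) :
    f.comp 0 = 0 := by
  have h := comp_add_of_isLin hq hf 0 0
  rw [add_zero] at h
  exact (left_eq_add.mp h)

theorem eval_zero_of_isLin (hq : q = p ^ e) {f : F[X]} (hf : IsLin q f) :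
    f.eval 0 = 0 := by
  have h := eval_add_of_isLin hq hf 0 0
  rw [add_zero] at h
  exact (left_eq_add.mp h)

theorem isLin_pow (hq : q = p ^ e) {f : F[X]} (hf : IsLin q f) (j : ℕ) :
    IsLin q (f ^ q ^ j) := by
  haveI : CharP F[X] p := charp_poly
  have h1 : f ^ q ^ j = ∑ k ∈ f.support, C (f.coeff k ^ q ^ j) * X ^ (k * q ^ j) := by
    conv_lhs => rw [f.as_sum_support]
    rw [hq, ← pow_mul, sum_pow_char_pow]
    refine Finset.sum_congr rfl fun k _ => ?_
    rw [← C_mul_X_pow_eq_monomial, mul_pow, ← C_pow, ← pow_mul]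
  rw [h1]
  refine isLin_sum _ _ fun k hk => ?_
  obtain ⟨m, rfl⟩ := hf k hk
  rw [← pow_add]
  exact isLin_C_mul_X_pow _ _

theorem isLin_comp (hq : q = p ^ e) {f g : F[X]} (hf : IsLin q f) (hg : IsLin q g) :
    IsLin q (f.comp g) := by
  rw [comp_eq_sum_left, Polynomial.sum]
  refine isLin_sum _ _ fun k hk => ?_
  obtain ⟨m, rfl⟩ := hf k hk
  exact isLin_C_mul _ (isLin_pow hq hg m)

end CharSec

theorem isLin_T (c : F) : IsLin q (X ^ q - C c * X : F[X]) := by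
  have h1 : (X ^ q - C c * X : F[X]) = C 1 * X ^ q ^ 1 + C (-c) * X ^ q ^ 0 := by
    simp only [pow_one, pow_zero, map_one, one_mul, map_neg]
    ring
  rw [h1]
  exact isLin_add (isLin_C_mul_X_pow _ _) (isLin_C_mul_X_pow _ _)

theorem natDegree_T (hq1 : 1 < q) (c : F) : (X ^ q - C c * X : F[X]).natDegree = q := by
  have h2 : (C c * X : F[X]).natDegree < (X ^ q : F[X]).natDegree := by
    rw [natDegree_X_pow]
    exact lt_of_le_of_lt ((natDegree_C_mul_le c X).trans (by simp [natDegree_X])) hq1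
  rw [natDegree_sub_eq_left_of_natDegree_lt h2, natDegree_X_pow]

theorem eval_T (hq1 : 1 < q) (Γ : F) : (X ^ q - C (Γ ^ (q - 1)) * X : F[X]).eval Γ = 0 := by
  simp only [eval_sub, eval_pow, eval_X, eval_mul, eval_C]
  rw [← pow_succ, Nat.sub_add_cancel (by omega), sub_self]

theorem lin_div {p e : ℕ} [Fact p.Prime] [CharP F p] (hq : q = p ^ e) (hq1 : 1 < q)
    {Γ : F} (hΓ : Γ ≠ 0) :
    ∀ m : ℕ, ∀ c : F[X], c.natDegree ≤ m → IsLin q c → c.eval Γ = 0 →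
      ∃ d : F[X], IsLin q d ∧ c = d.comp (X ^ q - C (Γ ^ (q - 1)) * X) := by
  intro m
  induction m using Nat.strong_induction_on with
  | _ m ih =>
  intro c hdeg hc hev
  by_cases hc0 : c = 0
  · exact ⟨0, isLin_zero, by simp [hc0]⟩
  obtain ⟨j, hj⟩ := hc c.natDegree (natDegree_mem_support_of_nonzero hc0)
  set T : F[X] := X ^ q - C (Γ ^ (q - 1)) * X with hT
  rcases Nat.eq_zero_or_pos j with rfl | hjpos
  · exfalso
    rw [pow_zero] at hj
    have h0 : c.coeff 0 = 0 := coeff_zero_of_isLin hq1 hc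
    have hsum := eval_eq_sum_range (p := c) Γ
    rw [hj, Finset.sum_range_succ, Finset.sum_range_one, h0, hev] at hsum
    simp only [zero_add, zero_mul, pow_one] at hsum
    have hc1 : c.coeff c.natDegree ≠ 0 := leadingCoeff_ne_zero.mpr hc0
    rw [hj] at hc1
    rcases mul_eq_zero.mp hsum.symm with h | h
    exacts [hc1 h, hΓ h]
  · haveI : CharP F[X] p := charp_poly
    set a := c.coeff c.natDegree with ha
    have ha0 : a ≠ 0 := leadingCoeff_ne_zero.mpr hc0
    set s : ℕ := (q - 1) * q ^ (j - 1) with hs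
    have hsplit : q ^ j = q * q ^ (j - 1) := by
      conv_rhs => rw [← pow_succ']
      rw [Nat.sub_add_cancel hjpos]
    have hTpow : T ^ q ^ (j - 1) = X ^ q ^ j - C (Γ ^ s) * X ^ q ^ (j - 1) := by
      have h2 : q ^ (j - 1) = p ^ (e * (j - 1)) := by rw [hq, ← pow_mul]
      rw [hT, h2, sub_pow_char_pow, ← h2, ← pow_mul, ← hsplit, mul_pow, ← C_pow, ← pow_mul, hs]
    have hcomp : (C a * X ^ q ^ (j - 1)).comp T = C a * X ^ q ^ j - C (a * Γ ^ s) * X ^ q ^ (j - 1) := by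
      rw [mul_comp, C_comp, X_pow_comp, hTpow, mul_sub, C_mul, mul_assoc]
    set c' : F[X] := c - C a * X ^ q ^ j + C (a * Γ ^ s) * X ^ q ^ (j - 1) with hc'
    have hceq : c = c' + (C a * X ^ q ^ (j - 1)).comp T := by
      rw [hcomp, hc']; ring
    have hlin' : IsLin q c' :=
      isLin_add (isLin_sub hc (isLin_C_mul_X_pow _ _)) (isLin_C_mul_X_pow _ _)
    have hev' : c'.eval Γ = 0 := by
      have hexp : s + q ^ (j - 1) = q ^ j := by
        rw [hs, hsplit]
        have : q - 1 + 1 = q := Nat.sub_add_cancel (by omega)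
        nlinarith [this]
      rw [hc']
      simp only [eval_add, eval_sub, eval_mul, eval_C, eval_pow, eval_X, hev]
      rw [mul_assoc, ← pow_add, hexp]
      ring
    have hdeg' : c'.natDegree < c.natDegree := by
      have hkpos : 0 < c.natDegree := by
        rw [hj]; exact pow_pos (by omega) j
      by_cases hc'0 : c' = 0
      · rw [hc'0, natDegree_zero]; exact hkpos
      rw [natDegree_lt_iff_degree_lt hc'0]
      have h1 : (c - C a * X ^ q ^ j).degree < (c.natDegree : WithBot ℕ) := by
        have := degree_sub_lt (p := c) (q := C a * X ^ q ^ j) ?_ hc0 ?_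
        · rwa [degree_eq_natDegree hc0] at this
        · rw [degree_C_mul_X_pow _ ha0, degree_eq_natDegree hc0, hj]
        · rw [leadingCoeff_C_mul_X_pow]; rfl
      have h2 : (C (a * Γ ^ s) * X ^ q ^ (j - 1)).degree < (c.natDegree : WithBot ℕ) := by
        refine lt_of_le_of_lt (degree_C_mul_X_pow_le _ _) ?_
        rw [hj]
        exact_mod_cast Nat.pow_lt_pow_right hq1 (by omega)
      exact lt_of_le_of_lt (degree_add_le _ _) (max_lt h1 h2)
    obtain ⟨d', hd'lin, hd'⟩ := ih c'.natDegree (lt_of_lt_of_le hdeg' hdeg) c' le_rfl hlin' hev'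
    refine ⟨d' + C a * X ^ q ^ (j - 1), isLin_add hd'lin (isLin_C_mul_X_pow _ _), ?_⟩
    rw [add_comp, ← hd', ← hceq]

end LinHelp

open LinHelp

/-- If `[P, -K]`, `[N, -D]` form a basis of the interpolation module `M_i`,
`Γ = P(g i) - K(r i)` and `Δ = N(g i) - D(r i)`, and `Γ ≠ 0`, then the rows of
`[[x^q - Γ^{q-1} x, 0], [Δ x, -Γ x]] ∘ [[P, -K], [N, -D]]` form a basis of the
interpolation module `M_{i+1}`. -/
theorem stmt19 {Fq F : Type*} [Field Fq] [Fintype Fq] [Field F] [Algebra Fq F]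
    {n : ℕ} (g r : ℕ → F) (hg : LinearIndependent Fq (fun j : Fin n => g j))
    (i : ℕ) (hi : i < n)
    (P K N D : Polynomial F)
    (hB : IsBasisOf (Fintype.card Fq) (InterpModN (Fintype.card Fq) g r i)
      ![![P, -K], ![N, -D]])
    (Γ Δ : F) (hΓdef : Γ = P.eval (g i) - K.eval (r i))
    (hΔdef : Δ = N.eval (g i) - D.eval (r i)) (hΓ : Γ ≠ 0) :
    IsBasisOf (Fintype.card Fq) (InterpModN (Fintype.card Fq) g r (i + 1))
      ![![(X ^ Fintype.card Fq - C (Γ ^ (Fintype.card Fq - 1)) * X).comp P,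
          (X ^ Fintype.card Fq - C (Γ ^ (Fintype.card Fq - 1)) * X).comp (-K)],
        ![(C Δ * X).comp P + (C (-Γ) * X).comp N,
          (C Δ * X).comp (-K) + (C (-Γ) * X).comp (-D)]] := by
  classical
  set q := Fintype.card Fq with hqdef
  have hq1 : 1 < q := Fintype.one_lt_card
  obtain ⟨e, hp, hq'⟩ := FiniteField.card Fq (ringChar Fq)
  haveI : Fact (Nat.Prime (ringChar Fq)) := ⟨hp⟩
  set p := ringChar Fq with hpdef
  haveI : CharP F p := charP_of_injective_algebraMap (algebraMap Fq F).injective p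
  have hq : q = p ^ (e : ℕ) := hq'
  set T : Polynomial F := X ^ q - C (Γ ^ (q - 1)) * X with hT
  have hTlin : IsLin q T := isLin_T _
  have hTΓ : T.eval Γ = 0 := eval_T hq1 Γ
  have hmulcomp : ∀ (x : F) (u : Polynomial F), (C x * X).comp u = C x * u := fun x u => by
    rw [mul_comp, C_comp, X_comp]
  obtain ⟨hBmem, hBspan, hBind⟩ := hB
  have h0mem := hBmem 0
  have h1mem := hBmem 1
  simp only [InterpModN, Set.mem_setOf_eq, Matrix.cons_val_zero, Matrix.cons_val_one,
    Matrix.head_cons, Fin.mk_zero, Fin.mk_one] at h0mem h1mem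
  have hPlin : IsLin q P := by simpa using h0mem.1 0
  have hKlin : IsLin q (-K) := by simpa using h0mem.1 1
  have hNlin : IsLin q N := by simpa using h1mem.1 0
  have hDlin : IsLin q (-D) := by simpa using h1mem.1 1
  have h0ev : ∀ j < i, P.eval (g j) + (-K).eval (r j) = 0 := fun j hj => by
    simpa using h0mem.2 j hj
  have h1ev : ∀ j < i, N.eval (g j) + (-D).eval (r j) = 0 := fun j hj => by
    simpa using h1mem.2 j hj
  have hΓeval : P.eval (g i) + (-K).eval (r i) = Γ := by
    rw [eval_neg, hΓdef]; ring
  have hΔeval : N.eval (g i) + (-D).eval (r i) = Δ := by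
    rw [eval_neg, hΔdef]; ring
  refine ⟨?_, ?_, ?_⟩
  · -- membership
    intro i'
    fin_cases i'
    · refine ⟨?_, ?_⟩
      · intro j
        fin_cases j
        · simpa using isLin_comp hq hTlin hPlin
        · simpa using isLin_comp hq hTlin hKlin
      · intro j hj
        simp only [Matrix.cons_val_zero, Matrix.cons_val_one, Matrix.head_cons, Fin.mk_zero, Fin.mk_one]
        rw [eval_comp, eval_comp, ← eval_add_of_isLin hq hTlin]
        rcases Nat.lt_succ_iff_lt_or_eq.mp hj with h | rfl
        · rw [h0ev j h, eval_zero_of_isLin hq hTlin]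
        · rw [hΓeval]; exact hTΓ
    · refine ⟨?_, ?_⟩
      · intro j
        fin_cases j
        · simpa using isLin_add (isLin_comp hq (isLin_C_mul_X Δ) hPlin)
            (isLin_comp hq (isLin_C_mul_X (-Γ)) hNlin)
        · simpa using isLin_add (isLin_comp hq (isLin_C_mul_X Δ) hKlin)
            (isLin_comp hq (isLin_C_mul_X (-Γ)) hDlin)
      · intro j hj
        simp only [Matrix.cons_val_zero, Matrix.cons_val_one, Matrix.head_cons, Fin.mk_zero, Fin.mk_one]
        simp only [hmulcomp, eval_add, eval_mul, eval_C]
        rcases Nat.lt_succ_iff_lt_or_eq.mp hj with h | rfl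
        · have e1 := h0ev j h
          have e2 := h1ev j h
          linear_combination Δ * e1 - Γ * e2
        · linear_combination Δ * hΓeval - Γ * hΔeval
  · -- spanning
    intro f hf
    have hfM : f ∈ InterpModN q g r i := ⟨hf.1, fun j hj => hf.2 j (by omega)⟩
    obtain ⟨a, halin, hfeq⟩ := hBspan f hfM
    set A := a 0 with hA
    set Bb := a 1 with hBb
    have hAlin : IsLin q A := halin 0
    have hBblin : IsLin q Bb := halin 1
    have hf0 : f 0 = A.comp P + Bb.comp N := by
      rw [hfeq]; simp [Fin.sum_univ_two]; rfl
    have hf1 : f 1 = A.comp (-K) + Bb.comp (-D) := by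
      rw [hfeq]; simp [Fin.sum_univ_two]; rfl
    have hABev : A.eval Γ + Bb.eval Δ = 0 := by
      have h := hf.2 i (by omega)
      rw [hf0, hf1] at h
      simp only [eval_add, eval_comp] at h
      have h2 : (A.eval (P.eval (g i)) + A.eval ((-K).eval (r i)))
          + (Bb.eval (N.eval (g i)) + Bb.eval ((-D).eval (r i))) = 0 := by
        linear_combination h
      rw [← eval_add_of_isLin hq hAlin, ← eval_add_of_isLin hq hBblin, hΓeval, hΔeval] at h2
      exact h2
    set c : Polynomial F := A + Bb.comp (C (Γ⁻¹ * Δ) * X) with hcdef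
    have hclin : IsLin q c := isLin_add hAlin (isLin_comp hq hBblin (isLin_C_mul_X _))
    have hcev : c.eval Γ = 0 := by
      rw [hcdef]
      simp only [eval_add, eval_comp, eval_mul, eval_C, eval_X]
      rw [show Γ⁻¹ * Δ * Γ = Δ by field_simp]
      exact hABev
    obtain ⟨d, hdlin, hdc⟩ := lin_div hq hq1 hΓ c.natDegree c le_rfl hclin hcev
    have key : ∀ u v : Polynomial F,
        d.comp (T.comp u) + (Bb.comp (C (-Γ⁻¹) * X)).comp ((C Δ * X).comp u + (C (-Γ) * X).comp v)
          = A.comp u + Bb.comp v := by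
      intro u v
      rw [← comp_assoc, ← hdc, hcdef, add_comp, comp_assoc, comp_assoc,
        hmulcomp, hmulcomp, hmulcomp, hmulcomp]
      have hexp : C (-Γ⁻¹) * (C Δ * u + C (-Γ) * v) = -(C (Γ⁻¹ * Δ) * u) + v := by
        have h1 : (-Γ⁻¹) * (-Γ) = 1 := by field_simp
        rw [mul_add, ← mul_assoc, ← mul_assoc, ← C_mul, ← C_mul, h1, C_1, one_mul]
        have h2 : (-Γ⁻¹) * Δ = -(Γ⁻¹ * Δ) := by ring
        rw [h2, map_neg, neg_mul]
      rw [hexp, comp_add_of_isLin hq hBblin]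
      have hz : Bb.comp (C (Γ⁻¹ * Δ) * u) + Bb.comp (-(C (Γ⁻¹ * Δ) * u)) = 0 := by
        rw [← comp_add_of_isLin hq hBblin, add_neg_cancel]
        exact comp_zero_of_isLin hq hBblin
      linear_combination hz
    refine ⟨![d, Bb.comp (C (-Γ⁻¹) * X)], ?_, ?_⟩
    · intro i'
      fin_cases i'
      · simpa using hdlin
      · simp only [Matrix.cons_val_one, Matrix.head_cons, Fin.mk_one]
        exact isLin_comp hq hBblin (isLin_C_mul_X _)
    · funext j
      fin_cases j
      · simp only [Fin.sum_univ_two, Matrix.cons_val_zero, Matrix.cons_val_one, Matrix.head_cons, Fin.mk_zero, Fin.mk_one]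
        rw [hf0]
        exact (key P N).symm
      · simp only [Fin.sum_univ_two, Matrix.cons_val_zero, Matrix.cons_val_one, Matrix.head_cons, Fin.mk_zero, Fin.mk_one]
        rw [hf1]
        exact (key (-K) (-D)).symm
  · -- independence
    intro a' ha'lin hzero
    set A' := a' 0 with hA'
    set B' := a' 1 with hB'
    have key2 : ∀ u v : Polynomial F,
        (A'.comp T + B'.comp (C Δ * X)).comp u + (B'.comp (C (-Γ) * X)).comp v
          = A'.comp (T.comp u) + B'.comp ((C Δ * X).comp u + (C (-Γ) * X).comp v) := by
      intro u v
      rw [add_comp, comp_assoc, comp_assoc, comp_assoc, comp_add_of_isLin hq (ha'lin 1)]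
      ring
    set b : Fin 2 → Polynomial F := ![A'.comp T + B'.comp (C Δ * X), B'.comp (C (-Γ) * X)]
      with hb
    have hblin : ∀ i', IsLin q (b i') := by
      intro i'
      fin_cases i'
      · simpa [hb] using isLin_add (isLin_comp hq (ha'lin 0) hTlin)
          (isLin_comp hq (ha'lin 1) (isLin_C_mul_X _))
      · simp only [hb, Matrix.cons_val_one, Matrix.head_cons, Fin.mk_one]
        exact isLin_comp hq (ha'lin 1) (isLin_C_mul_X _)
    have hbzero : (fun j => ∑ i', (b i').comp (![![P, -K], ![N, -D]] i' j)) =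
        fun _ => (0 : Polynomial F) := by
      funext j
      have h := congrFun hzero j
      fin_cases j
      · simp only [Fin.sum_univ_two, Matrix.cons_val_zero, Matrix.cons_val_one,
          Matrix.head_cons, Fin.mk_zero, Fin.mk_one, hb] at h ⊢
        rw [key2]
        exact h
      · simp only [Fin.sum_univ_two, Matrix.cons_val_zero, Matrix.cons_val_one,
          Matrix.head_cons, Fin.mk_zero, Fin.mk_one, hb] at h ⊢
        rw [key2]
        exact h
    have hind := hBind b hblin hbzero
    have hB'0 : B' = 0 := by
      have h1 : B'.comp (C (-Γ) * X) = 0 := by simpa [hb] using hind 1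
      have h2 : (C (-Γ) * X : Polynomial F).comp (C (-Γ⁻¹) * X) = X := by
        rw [hmulcomp, ← mul_assoc, ← C_mul]
        have : (-Γ) * (-Γ⁻¹) = 1 := by field_simp
        rw [this, C_1, one_mul]
      calc B' = B'.comp X := comp_X.symm
        _ = (B'.comp (C (-Γ) * X)).comp (C (-Γ⁻¹) * X) := by rw [comp_assoc, h2]
        _ = 0 := by rw [h1, zero_comp]
    have hA'0 : A' = 0 := by
      have h1 : A'.comp T + B'.comp (C Δ * X) = 0 := by simpa [hb] using hind 0
      rw [hB'0, zero_comp, add_zero] at h1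
      rcases comp_eq_zero_iff.mp h1 with h | ⟨_, hTc⟩
      · exact h
      · exfalso
        have hdg := natDegree_T (F := F) hq1 (Γ ^ (q - 1))
        rw [← hT] at hdg
        rw [hTc, natDegree_C] at hdg
        omega
    intro i'
    fin_cases i'
    exacts [hA'0, hB'0]
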